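/- Let o ≥ 2, k ≥ 1, b₁ ≥ 1, b₂ ≥ 1 be integers, and let l₁, l₂ be positive divisors of o such that l₁·l₂ divides o·k. Then ⌊b₁l₁/o⌋ + ⌊b₂l₂/o⌋ ≤ b₁·b₂·k, with equality if and only if, up to exchanging the pairs (b₁,l₁) and (b₂,l₂), one of the following holds: (i) o = 2, k = 2, b₁ = b₂ = 1 and l₁ = l₂ = 2; (ii) o = 2, k = 1, (b₁,l₁) = (2,1) and (b₂,l₂) = (1,2); (iii) k = 1, (b₁,l₁) = (1,1) and l₂ = o with b₂ arbitrary. -/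

import Mathlib

lemma s8_half (b l o : ℕ) (hl : 0 < l) (h : 2 * l ≤ o) : 2 * (b * l / o) ≤ b := by
  have h1 : b * l / o ≤ b * l / (2 * l) := Nat.div_le_div_left h (by omega)
  have h2 : b * l / (2 * l) = b / 2 := by
    rw [mul_comm 2 l, ← Nat.div_div_eq_div_mul, Nat.mul_div_cancel _ hl]
  omega

lemma s8_add_le_mul (a b : ℕ) (ha : 1 ≤ a) (hb : 1 ≤ b) : a + b ≤ a * b + 1 := by nlinarith

lemma s8_split (o l : ℕ) (ho : 0 < o) (hd : l ∣ o) : l = o ∨ 2 * l ≤ o := by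
  by_cases h : l = o
  · exact Or.inl h
  · right
    obtain ⟨c, hc⟩ := hd
    have h0 : c ≠ 0 := by rintro rfl; simp at hc; omega
    have h1 : c ≠ 1 := by rintro rfl; simp at hc; exact h hc.symm
    calc 2 * l = l * 2 := mul_comm _ _
    _ ≤ l * c := Nat.mul_le_mul_left l (by omega)
    _ = o := hc.symm


/-- Numerical inequality from isotropic wall-crossing on a bielliptic surface:
for `o ≥ 2`, `k ≥ 1`, `b₁, b₂ ≥ 1`, and positive divisors `l₁, l₂` of `o` with
`l₁·l₂ ∣ o·k`, one has `⌊b₁l₁/o⌋ + ⌊b₂l₂/o⌋ ≤ b₁·b₂·k`, with the listed equality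
cases (up to exchanging the pairs `(b₁,l₁)` and `(b₂,l₂)`). -/
theorem stmt_8 (o k b₁ b₂ l₁ l₂ : ℕ)
    (ho : 2 ≤ o) (hk : 1 ≤ k) (hb₁ : 1 ≤ b₁) (hb₂ : 1 ≤ b₂)
    (hl₁ : 0 < l₁) (hl₂ : 0 < l₂) (hl₁o : l₁ ∣ o) (hl₂o : l₂ ∣ o)
    (hdvd : l₁ * l₂ ∣ o * k) :
    b₁ * l₁ / o + b₂ * l₂ / o ≤ b₁ * b₂ * k ∧
    (b₁ * l₁ / o + b₂ * l₂ / o = b₁ * b₂ * k ↔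
      ((o = 2 ∧ k = 2 ∧ b₁ = 1 ∧ b₂ = 1 ∧ l₁ = 2 ∧ l₂ = 2) ∨
       (o = 2 ∧ k = 1 ∧ b₁ = 2 ∧ l₁ = 1 ∧ b₂ = 1 ∧ l₂ = 2) ∨
       (o = 2 ∧ k = 1 ∧ b₂ = 2 ∧ l₂ = 1 ∧ b₁ = 1 ∧ l₁ = 2) ∨
       (k = 1 ∧ b₁ = 1 ∧ l₁ = 1 ∧ l₂ = o) ∨
       (k = 1 ∧ b₂ = 1 ∧ l₂ = 1 ∧ l₁ = o))) := by
  have ho0 : 0 < o := by omega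
  have hrev : ((o = 2 ∧ k = 2 ∧ b₁ = 1 ∧ b₂ = 1 ∧ l₁ = 2 ∧ l₂ = 2) ∨
       (o = 2 ∧ k = 1 ∧ b₁ = 2 ∧ l₁ = 1 ∧ b₂ = 1 ∧ l₂ = 2) ∨
       (o = 2 ∧ k = 1 ∧ b₂ = 2 ∧ l₂ = 1 ∧ b₁ = 1 ∧ l₁ = 2) ∨
       (k = 1 ∧ b₁ = 1 ∧ l₁ = 1 ∧ l₂ = o) ∨
       (k = 1 ∧ b₂ = 1 ∧ l₂ = 1 ∧ l₁ = o)) →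
      b₁ * l₁ / o + b₂ * l₂ / o = b₁ * b₂ * k := by
    have hz : (1 : ℕ) / o = 0 := Nat.div_eq_of_lt (by omega)
    rintro (⟨rfl, rfl, rfl, rfl, rfl, rfl⟩ | ⟨rfl, rfl, rfl, rfl, rfl, rfl⟩ |
            ⟨rfl, rfl, rfl, rfl, rfl, rfl⟩ | ⟨rfl, rfl, rfl, hlo⟩ | ⟨rfl, rfl, rfl, hlo⟩)
    · norm_num
    · norm_num
    · norm_num
    · rw [hlo]
      simp only [one_mul, mul_one, hz, Nat.mul_div_cancel _ ho0, zero_add]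
    · rw [hlo]
      simp only [one_mul, mul_one, hz, Nat.mul_div_cancel _ ho0, add_zero]
  rcases s8_split o l₁ ho0 hl₁o with h1 | h1 <;> rcases s8_split o l₂ ho0 hl₂o with h2 | h2
  · -- l₁ = o, l₂ = o
    have d1 : b₁ * l₁ / o = b₁ := by rw [h1, Nat.mul_div_cancel _ ho0]
    have d2 : b₂ * l₂ / o = b₂ := by rw [h2, Nat.mul_div_cancel _ ho0]
    rw [d1, d2]
    rw [h1, h2] at hdvd
    have hok : o ∣ k := (mul_dvd_mul_iff_left (show o ≠ 0 by omega)).mp hdvd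
    have hk2 : 2 ≤ k := le_trans ho (Nat.le_of_dvd (by omega) hok)
    have e1 : b₁ * 1 * 2 ≤ b₁ * b₂ * k := Nat.mul_le_mul (Nat.mul_le_mul_left _ hb₂) hk2
    have e2 : 1 * b₂ * 2 ≤ b₁ * b₂ * k := Nat.mul_le_mul (Nat.mul_le_mul_right _ hb₁) hk2
    refine ⟨by linarith, ?_, ?_⟩
    · intro heq
      have hb12 : b₁ = b₂ := le_antisymm (by linarith) (by linarith)
      subst hb12
      have hc : b₁ * (b₁ * k) = b₁ * 2 := by rw [← mul_assoc]; linarith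
      have hbk : b₁ * k = 2 := Nat.eq_of_mul_eq_mul_left (by omega) hc
      have hm : b₁ * 2 ≤ b₁ * k := Nat.mul_le_mul_left _ hk2
      rw [hbk] at hm
      have hb1 : b₁ = 1 := by omega
      have hk2' : k = 2 := by rw [hb1] at hbk; omega
      have ho2 : o = 2 := by
        have := Nat.le_of_dvd (by omega) hok
        omega
      exact Or.inl ⟨ho2, hk2', hb1, hb1, h1.trans ho2, h2.trans ho2⟩
    · intro hd
      have := hrev hd
      rwa [d1, d2] at this
  · -- l₁ = o, 2*l₂ ≤ o
    have d1 : b₁ * l₁ / o = b₁ := by rw [h1, Nat.mul_div_cancel _ ho0]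
    rw [d1]
    rw [h1] at hdvd
    have hlk : l₂ ∣ k := (mul_dvd_mul_iff_left (show o ≠ 0 by omega)).mp hdvd
    have e4 : 2 * (b₂ * l₂ / o) ≤ b₂ := s8_half _ _ _ hl₂ h2
    have e1 : b₁ + b₂ ≤ b₁ * b₂ + 1 := s8_add_le_mul _ _ hb₁ hb₂
    have e2 : b₁ * b₂ ≤ b₁ * b₂ * k := Nat.le_mul_of_pos_right _ (by omega)
    have e3 : b₁ ≤ b₁ * b₂ := Nat.le_mul_of_pos_right _ (by omega)
    refine ⟨?_, ?_, ?_⟩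
    · rcases Nat.eq_zero_or_pos (b₂ * l₂ / o) with hq | hq
      · rw [hq]; linarith
      · linarith
    · intro heq
      rcases Nat.eq_zero_or_pos (b₂ * l₂ / o) with hq | hq
      · rw [hq, add_zero] at heq
        have hc : b₁ * (b₂ * k) = b₁ * 1 := by rw [← mul_assoc, mul_one]; exact heq.symm
        have hone := Nat.eq_of_mul_eq_mul_left (show 0 < b₁ by omega) hc
        have hb2 : b₂ = 1 := Nat.eq_one_of_mul_eq_one_right hone
        have hk1 : k = 1 := Nat.eq_one_of_mul_eq_one_left hone
        have hl21 : l₂ = 1 := Nat.dvd_one.mp (hk1 ▸ hlk)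
        exact Or.inr (Or.inr (Or.inr (Or.inr ⟨hk1, hb2, hl21, h1⟩)))
      · have key : b₂ * l₂ / o = 1 ∧ b₂ = 2 ∧ b₁ * b₂ = b₁ * b₂ * k ∧ b₁ + 1 = b₁ * b₂ := by
          generalize hQ : b₁ * b₂ * k = Q at heq e2 ⊢
          generalize hP : b₁ * b₂ = P at e1 e2 e3 ⊢
          generalize hq2 : b₂ * l₂ / o = q at heq e4 hq ⊢
          omega
        obtain ⟨hq1, hb22, hPQ, hP1⟩ := key
        have hc : b₁ * b₂ * 1 = b₁ * b₂ * k := by rw [mul_one]; exact hPQ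
        have hk1 : k = 1 := Nat.eq_of_mul_eq_mul_left (show 0 < b₁ * b₂ by positivity) hc.symm
        have hl21 : l₂ = 1 := Nat.dvd_one.mp (hk1 ▸ hlk)
        have hb11 : b₁ = 1 := by rw [hb22] at hP1; omega
        have ho2 : o = 2 := by
          rw [hb22, hl21, mul_one] at hq1
          have := (Nat.one_le_div_iff ho0).mp (le_of_eq hq1.symm)
          omega
        exact Or.inr (Or.inr (Or.inl ⟨ho2, hk1, hb22, hl21, hb11, h1.trans ho2⟩))
    · intro hd
      have := hrev hd
      rwa [d1] at this
  · -- 2*l₁ ≤ o, l₂ = o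
    have d2 : b₂ * l₂ / o = b₂ := by rw [h2, Nat.mul_div_cancel _ ho0]
    rw [d2]
    rw [h2] at hdvd
    have hlk : l₁ ∣ k := (mul_dvd_mul_iff_left (show o ≠ 0 by omega)).mp
      (by rwa [mul_comm] at hdvd)
    have e4 : 2 * (b₁ * l₁ / o) ≤ b₁ := s8_half _ _ _ hl₁ h1
    have e1 : b₁ + b₂ ≤ b₁ * b₂ + 1 := s8_add_le_mul _ _ hb₁ hb₂
    have e2 : b₁ * b₂ ≤ b₁ * b₂ * k := Nat.le_mul_of_pos_right _ (by omega)
    have e3 : b₂ ≤ b₁ * b₂ := Nat.le_mul_of_pos_left _ (by omega)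
    refine ⟨?_, ?_, ?_⟩
    · rcases Nat.eq_zero_or_pos (b₁ * l₁ / o) with hq | hq
      · rw [hq]; linarith
      · linarith
    · intro heq
      rcases Nat.eq_zero_or_pos (b₁ * l₁ / o) with hq | hq
      · rw [hq, zero_add] at heq
        have hc : b₂ * (b₁ * k) = b₂ * 1 := by
          rw [mul_one, ← mul_assoc, mul_comm b₂ b₁]; exact heq.symm
        have hone := Nat.eq_of_mul_eq_mul_left (show 0 < b₂ by omega) hc
        have hb1 : b₁ = 1 := Nat.eq_one_of_mul_eq_one_right hone
        have hk1 : k = 1 := Nat.eq_one_of_mul_eq_one_left hone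
        have hl11 : l₁ = 1 := Nat.dvd_one.mp (hk1 ▸ hlk)
        exact Or.inr (Or.inr (Or.inr (Or.inl ⟨hk1, hb1, hl11, h2⟩)))
      · have key : b₁ * l₁ / o = 1 ∧ b₁ = 2 ∧ b₁ * b₂ = b₁ * b₂ * k ∧ b₂ + 1 = b₁ * b₂ := by
          generalize hQ : b₁ * b₂ * k = Q at heq e2 ⊢
          generalize hP : b₁ * b₂ = P at e1 e2 e3 ⊢
          generalize hq2 : b₁ * l₁ / o = q at heq e4 hq ⊢
          omega
        obtain ⟨hq1, hb12, hPQ, hP1⟩ := key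
        have hc : b₁ * b₂ * 1 = b₁ * b₂ * k := by rw [mul_one]; exact hPQ
        have hk1 : k = 1 := Nat.eq_of_mul_eq_mul_left (show 0 < b₁ * b₂ by positivity) hc.symm
        have hl11 : l₁ = 1 := Nat.dvd_one.mp (hk1 ▸ hlk)
        have hb21 : b₂ = 1 := by rw [hb12] at hP1; omega
        have ho2 : o = 2 := by
          rw [hb12, hl11, mul_one] at hq1
          have := (Nat.one_le_div_iff ho0).mp (le_of_eq hq1.symm)
          omega
        exact Or.inr (Or.inl ⟨ho2, hk1, hb12, hl11, hb21, h2.trans ho2⟩)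
    · intro hd
      have := hrev hd
      rwa [d2] at this
  · -- 2*l₁ ≤ o, 2*l₂ ≤ o
    have e4 : 2 * (b₁ * l₁ / o) ≤ b₁ := s8_half _ _ _ hl₁ h1
    have e5 : 2 * (b₂ * l₂ / o) ≤ b₂ := s8_half _ _ _ hl₂ h2
    have hlt : b₁ * l₁ / o + b₂ * l₂ / o < b₁ * b₂ * k := by
      rcases Nat.lt_or_ge (b₁ * b₂) 2 with hp | hp
      · have hm : 1 * 1 ≤ b₁ * b₂ := Nat.mul_le_mul hb₁ hb₂
        have hpe : b₁ * b₂ = 1 := by omega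
        have hb1 : b₁ = 1 := Nat.eq_one_of_mul_eq_one_right hpe
        have hb2 : b₂ = 1 := Nat.eq_one_of_mul_eq_one_left hpe
        subst hb1; subst hb2
        rw [one_mul, one_mul, Nat.div_eq_of_lt (by omega), Nat.div_eq_of_lt (by omega)]
        omega
      · have e1 : b₁ + b₂ ≤ b₁ * b₂ + 1 := s8_add_le_mul _ _ hb₁ hb₂
        have e2 : b₁ * b₂ ≤ b₁ * b₂ * k := Nat.le_mul_of_pos_right _ (by omega)
        generalize hQ : b₁ * b₂ * k = Q at e2 ⊢
        generalize hP : b₁ * b₂ = P at e1 e2 hp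
        generalize hq1 : b₁ * l₁ / o = q₁ at e4 ⊢
        generalize hq2 : b₂ * l₂ / o = q₂ at e5 ⊢
        omega
    refine ⟨le_of_lt hlt, ?_, ?_⟩
    · intro heq; exact absurd heq (Nat.ne_of_lt hlt)
    · rintro (⟨rfl, rfl, rfl, rfl, rfl, rfl⟩ | ⟨rfl, rfl, rfl, rfl, rfl, rfl⟩ |
              ⟨rfl, rfl, rfl, rfl, rfl, rfl⟩ | ⟨rfl, rfl, rfl, rfl⟩ | ⟨rfl, rfl, rfl, rfl⟩) <;>
        omega
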